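/- Let a* = (m−a1, m−a2, m−a3, m−a4) be the dual type (also a type in the mixed case). Let k be an algebraically closed field of characteristic p. For every λ ∈ k with λ ≠ 0 and λ ≠ 1, one has Φ_a(λ) = 0 if and only if Φ_{a*}(λ) = 0. -/

import Mathlib

open Polynomial Finset

section Aux

variable {p : ℕ} [Fact p.Prime]

lemma castp {a b : ℕ} (h : a + b = p) : ((a : ZMod p)) = -(b : ZMod p) := by
  have := congrArg (Nat.cast : ℕ → ZMod p) h
  push_cast at this
  rw [ZMod.natCast_self] at this
  linear_combination this

lemma descCast (n s : ℕ) (hs : s ≤ p - 1 - n) (hn : n ≤ p - 1) :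
    (((p - 1 - n).descFactorial s : ℕ) : ZMod p)
      = (-1) ^ s * (((n+1).ascFactorial s : ℕ) : ZMod p) := by
  induction s with
  | zero => simp
  | succ s ih =>
    have hs' : s ≤ p - 1 - n := le_of_lt (Nat.lt_of_succ_le hs)
    rw [Nat.descFactorial_succ, Nat.ascFactorial_succ]
    push_cast
    rw [ih hs']
    have hc : ((p - 1 - n - s : ℕ) : ZMod p) = -((n + 1 + s : ℕ) : ZMod p) := by
      apply castp
      omega
    push_cast at hc
    rw [hc]
    ring

lemma L1 (n s : ℕ) (hn : n ≤ p - 1) (hs : s ≤ p - 1) :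
    (((p - 1 - n).choose s : ℕ) : ZMod p) = (-1) ^ s * (((n + s).choose s : ℕ) : ZMod p) := by
  have hp := (Fact.out : p.Prime)
  have h2 := hp.two_le
  have hfac : ((s.factorial : ℕ) : ZMod p) ≠ 0 := by
    rw [Ne, ZMod.natCast_eq_zero_iff]
    intro hdvd
    exact absurd ((Nat.Prime.dvd_factorial hp).mp hdvd) (by omega)
  by_cases h : s ≤ p - 1 - n
  · apply mul_right_cancel₀ hfac
    have e1 : (p - 1 - n).descFactorial s = s.factorial * (p - 1 - n).choose s :=
      Nat.descFactorial_eq_factorial_mul_choose _ _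
    have e2 : (n+1).ascFactorial s = s.factorial * (n + s).choose s :=
      Nat.ascFactorial_eq_factorial_mul_choose _ _
    have := descCast (p := p) n s h hn
    rw [e1, e2] at this
    push_cast at this ⊢
    linear_combination this
  · rw [Nat.choose_eq_zero_of_lt (by omega)]
    have : ((((n+s).choose s : ℕ)) : ZMod p) = 0 := by
      rw [ZMod.natCast_eq_zero_iff]
      exact Nat.Prime.dvd_choose hp (by omega) (by omega) (by omega)
    rw [this]
    ring

lemma choose_nz (n t : ℕ) (hn : n ≤ p - 1) (ht : t ≤ n) :
    ((n.choose t : ℕ) : ZMod p) ≠ 0 := by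
  have hp := (Fact.out : p.Prime)
  have h2 := hp.two_le
  rw [Ne, ZMod.natCast_eq_zero_iff]
  intro hdvd
  · have hd : n.choose t ∣ n.factorial :=
      ⟨t.factorial * (n - t).factorial, by
        rw [← Nat.choose_mul_factorial_mul_factorial ht]; ring⟩
    have : p ∣ n.factorial := hdvd.trans hd
    exact absurd ((Nat.Prime.dvd_factorial hp).mp this) (by omega)

lemma choose_ndvd (n t : ℕ) (hn : n ≤ p - 1) (ht : t ≤ n) : ¬ p ∣ n.choose t := by
  have hp := (Fact.out : p.Prime)
  have h2 := hp.two_le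
  intro hdvd
  have hd : n.choose t ∣ n.factorial :=
    ⟨t.factorial * (n - t).factorial, by
      rw [← Nat.choose_mul_factorial_mul_factorial ht]; ring⟩
  have : p ∣ n.factorial := hdvd.trans hd
  exact absurd ((Nat.Prime.dvd_factorial hp).mp this) (by omega)

noncomputable def Hb (p a b : ℕ) : Polynomial (Polynomial (ZMod p)) :=
  (1 + X) ^ a * (1 + C X * X) ^ b

lemma coeff_one_add_CX_pow {R : Type*} [CommRing R] (r : R) (b j : ℕ) :
    ((1 + C r * X) ^ b).coeff j = r ^ j * (b.choose j : R) := by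
  rw [add_comm (1 : R[X]), add_pow]
  rw [finset_sum_coeff]
  have hterm : ∀ k ∈ range (b + 1),
      ((C r * X) ^ k * 1 ^ (b - k) * (b.choose k : R[X])).coeff j
        = if k = j then r ^ j * (b.choose j : R) else 0 := by
    intro k _
    rw [one_pow, mul_one, mul_pow, ← C_pow, ← C_eq_natCast, mul_right_comm, ← C_mul,
      coeff_C_mul, coeff_X_pow]
    by_cases hk : k = j
    · subst hk; simp [mul_comm]
    · simp [hk, Ne.symm hk]
  rw [Finset.sum_congr rfl hterm, Finset.sum_ite_eq' (range (b+1)) j]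
  by_cases hj : j ∈ range (b+1)
  · rw [if_pos hj]
  · rw [if_neg hj]
    have : b < j := by simpa using hj
    rw [Nat.choose_eq_zero_of_lt this]
    push_cast
    ring

lemma Hb_coeff (a b t : ℕ) :
    (Hb p a b).coeff t
      = ∑ j ∈ range (t + 1),
          C ((a.choose (t - j) * b.choose j : ℕ) : ZMod p) * X ^ j := by
  rw [Hb, mul_comm, coeff_mul, Finset.Nat.sum_antidiagonal_eq_sum_range_succ_mk]
  refine Finset.sum_congr rfl fun j hj => ?_
  rw [coeff_one_add_CX_pow, coeff_one_add_X_pow]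
  push_cast
  rw [C_mul, C_eq_natCast, C_eq_natCast]
  ring

lemma Hb_ode (a b : ℕ) (ha : 1 ≤ a) (hb : 1 ≤ b) :
    (1 + X) * (1 + C X * X) * derivative (Hb p a b)
      = ((a : Polynomial (Polynomial (ZMod p))) * (1 + C X * X)
          + (b : Polynomial (Polynomial (ZMod p))) * C X * (1 + X)) * Hb p a b := by
  obtain ⟨a', rfl⟩ := Nat.exists_eq_add_of_le ha
  obtain ⟨b', rfl⟩ := Nat.exists_eq_add_of_le hb
  rw [Hb, derivative_mul, derivative_pow, derivative_pow]
  have d1 : derivative (1 + X : Polynomial (Polynomial (ZMod p))) = 1 := by simp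
  have d2 : derivative (1 + C X * X : Polynomial (Polynomial (ZMod p))) = C X := by simp
  rw [d1, d2]
  have e1 : 1 + a' - 1 = a' := by omega
  have e2 : 1 + b' - 1 = b' := by omega
  rw [e1, e2]
  push_cast
  simp only [map_add, map_one, map_natCast]
  ring

lemma Hb_rec (a b v : ℕ) (ha : 1 ≤ a) (hb : 1 ≤ b) :
    ((v + 2 : ℕ) : Polynomial (ZMod p)) * (Hb p a b).coeff (v + 2)
      = ((a : Polynomial (ZMod p)) + (b : Polynomial (ZMod p)) * X
            - (1 + X) * ((v + 1 : ℕ) : Polynomial (ZMod p))) * (Hb p a b).coeff (v + 1)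
        + X * ((a : Polynomial (ZMod p)) + (b : Polynomial (ZMod p))
            - (v : Polynomial (ZMod p))) * (Hb p a b).coeff v := by
  have ode := Hb_ode (p := p) a b ha hb
  set H := Hb p a b with hH
  set D := derivative H with hD
  have expL : (1 + X) * (1 + C X * X) * D = D + C (1 + X) * (X * D) + C X * (X ^ 2 * D) := by
    rw [C_add, C_1]; ring
  have expR : ((a : Polynomial (Polynomial (ZMod p))) * (1 + C X * X)
          + (b : Polynomial (Polynomial (ZMod p))) * C X * (1 + X)) * H
      = C ((a : Polynomial (ZMod p)) + (b : Polynomial (ZMod p)) * X) * H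
        + C (((a : Polynomial (ZMod p)) + (b : Polynomial (ZMod p))) * X) * (X * H) := by
    simp only [C_mul, C_add, map_natCast]
    ring
  rw [expL, expR] at ode
  have hco := congrArg (fun q => q.coeff (v + 1)) ode
  simp only [coeff_add, coeff_C_mul, coeff_X_mul] at hco
  have h2 : (X ^ 2 * D).coeff (v + 1) = (v : Polynomial (ZMod p)) * H.coeff v := by
    rw [coeff_X_pow_mul']
    rcases v with _ | w
    · simp
    · rw [if_pos (by omega)]
      have hw : w + 1 + 1 - 2 = w := by omega
      rw [hw, hD, coeff_derivative]
      push_cast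
      ring
  rw [h2, hD, coeff_derivative, coeff_derivative] at hco
  push_cast at hco ⊢
  linear_combination hco

lemma L3 (n1 n2 u : ℕ) (h : n1 ≤ u) :
    u.choose n1 * (n2 + u).choose u = (n1 + n2).choose n1 * (n2 + u).choose (u - n1) := by
  have h1 := Nat.choose_mul_factorial_mul_factorial h
  have h2 := Nat.choose_mul_factorial_mul_factorial (show u ≤ n2 + u by omega)
  rw [show n2 + u - u = n2 by omega] at h2
  have h3 := Nat.choose_mul_factorial_mul_factorial (show n1 ≤ n1 + n2 by omega)
  rw [show n1 + n2 - n1 = n2 by omega] at h3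
  have h4 := Nat.choose_mul_factorial_mul_factorial (show u - n1 ≤ n2 + u by omega)
  rw [show n2 + u - (u - n1) = n1 + n2 by omega] at h4
  apply Nat.eq_of_mul_eq_mul_right
    (show 0 < n1.factorial * ((u - n1).factorial * n2.factorial) by positivity)
  calc u.choose n1 * (n2 + u).choose u * (n1.factorial * ((u - n1).factorial * n2.factorial))
      = (u.choose n1 * n1.factorial * (u - n1).factorial) * (n2 + u).choose u * n2.factorial := by
        ring
    _ = (n2 + u).choose u * u.factorial * n2.factorial := by rw [h1]; ring
    _ = (n2 + u).factorial := h2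
    _ = (n2 + u).choose (u - n1) * (u - n1).factorial * (n1 + n2).factorial := h4.symm
    _ = ((n1 + n2).choose n1 * n1.factorial * n2.factorial) * ((n2 + u).choose (u - n1)
          * (u - n1).factorial) := by rw [h3]; ring
    _ = (n1 + n2).choose n1 * (n2 + u).choose (u - n1)
          * (n1.factorial * ((u - n1).factorial * n2.factorial)) := by ring

-- scalar base-case identity
lemma base_scalar (n1 n2 u : ℕ) (hodd : p % 2 = 1)
    (hs : n1 + n2 ≤ p - 1) (hu1 : n1 ≤ u) (hu2 : u ≤ p - 1 - n2) :
    (((p - 1 - n1).choose (p - 1 - u) : ℕ) : ZMod p) * (((p - 1 - n2).choose u : ℕ) : ZMod p)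
      = (-1) ^ (p - 1 - n1 - n2 + n1) * (((n1 + n2).choose n1 : ℕ) : ZMod p)
          * ((-1) ^ (p - 1 - n1 - n2 - (u - n1)) * (((p - 1 - n1 - n2).choose (u - n1) : ℕ) : ZMod p)) := by
  have hp := (Fact.out : p.Prime)
  have h2 := hp.two_le
  set B := p - 1 - n1 - n2 with hB
  have e1 : (((p - 1 - n1).choose (p - 1 - u) : ℕ) : ZMod p)
      = (-1) ^ (p - 1 - u) * (((n1 + (p - 1 - u)).choose (p - 1 - u) : ℕ) : ZMod p) :=
    L1 n1 (p - 1 - u) (by omega) (by omega)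
  have e1b : (n1 + (p - 1 - u)).choose (p - 1 - u) = (n1 + (p - 1 - u)).choose n1 := by
    rw [Nat.add_comm]
    exact Nat.choose_symm_add ..
  have e1c : n1 + (p - 1 - u) = p - 1 - (u - n1) := by omega
  have e1d : (((p - 1 - (u - n1)).choose n1 : ℕ) : ZMod p)
      = (-1) ^ n1 * ((((u - n1) + n1).choose n1 : ℕ) : ZMod p) :=
    L1 (u - n1) n1 (by omega) (by omega)
  have e1e : u - n1 + n1 = u := by omega
  have e2 : (((p - 1 - n2).choose u : ℕ) : ZMod p)
      = (-1) ^ u * (((n2 + u).choose u : ℕ) : ZMod p) := L1 n2 u (by omega) (by omega)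
  have e3 : ((B.choose (u - n1) : ℕ) : ZMod p)
      = (-1) ^ (u - n1) * (((n1 + n2 + (u - n1)).choose (u - n1) : ℕ) : ZMod p) := by
    rw [hB, show p - 1 - n1 - n2 = p - 1 - (n1 + n2) by omega]
    exact L1 (n1 + n2) (u - n1) (by omega) (by omega)
  have e3b : n1 + n2 + (u - n1) = n2 + u := by omega
  have l3 := L3 n1 n2 u hu1
  have l3c : ((u.choose n1 : ℕ) : ZMod p) * (((n2 + u).choose u : ℕ) : ZMod p)
      = (((n1 + n2).choose n1 : ℕ) : ZMod p) * (((n2 + u).choose (u - n1) : ℕ) : ZMod p) := by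
    have := congrArg (Nat.cast : ℕ → ZMod p) l3
    push_cast at this
    exact this
  have sign1 : ((-1 : ZMod p)) ^ (p - 1 - u) * (-1) ^ u = 1 := by
    rw [← pow_add, show p - 1 - u + u = p - 1 by omega]
    exact Even.neg_one_pow ⟨(p - 1) / 2, by omega⟩
  have sign2 : ((-1 : ZMod p)) ^ (B - (u - n1)) * (-1) ^ (u - n1) = (-1) ^ B := by
    rw [← pow_add, show B - (u - n1) + (u - n1) = B by omega]
  have sign3 : ((-1 : ZMod p)) ^ (B + n1) * (-1) ^ B = (-1) ^ n1 := by
    rw [← pow_add, show B + n1 + B = n1 + 2 * B by omega, pow_add, pow_mul]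
    norm_num
  rw [e1, e1b, e1c, e1d, e1e, e2, e3, e3b]
  calc (-1) ^ (p - 1 - u) * ((-1) ^ n1 * ((u.choose n1 : ℕ) : ZMod p))
        * ((-1) ^ u * (((n2 + u).choose u : ℕ) : ZMod p))
      = ((-1) ^ (p - 1 - u) * (-1) ^ u) * (-1) ^ n1
          * (((u.choose n1 : ℕ) : ZMod p) * (((n2 + u).choose u : ℕ) : ZMod p)) := by ring
    _ = (-1) ^ n1 * ((((n1 + n2).choose n1 : ℕ) : ZMod p)
          * (((n2 + u).choose (u - n1) : ℕ) : ZMod p)) := by rw [sign1, l3c]; ring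
    _ = ((-1) ^ (B + n1) * (-1) ^ B) * ((((n1 + n2).choose n1 : ℕ) : ZMod p)
          * (((n2 + u).choose (u - n1) : ℕ) : ZMod p)) := by rw [sign3]
    _ = (-1) ^ (B + n1) * (((n1 + n2).choose n1 : ℕ) : ZMod p)
          * (((-1) ^ (B - (u - n1)) * (-1) ^ (u - n1)) * (((n2 + u).choose (u - n1) : ℕ) : ZMod p)) := by
        rw [sign2]; ring
    _ = _ := by ring

lemma sum_coeff (M : ℕ) (c : ℕ → ZMod p) (u : ℕ) :
    (∑ j ∈ range M, C (c j) * X ^ j).coeff u = if u < M then c u else 0 := by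
  rw [finset_sum_coeff]
  have hterm : ∀ j ∈ range M, (C (c j) * X ^ j).coeff u = if j = u then c j else 0 := by
    intro j _
    rw [coeff_C_mul, coeff_X_pow]
    rcases eq_or_ne j u with h | h
    · subst h; simp
    · simp [h, Ne.symm h]
  rw [Finset.sum_congr rfl hterm, Finset.sum_ite_eq' (range M) u]
  simp [Finset.mem_range]

lemma base_poly (n1 n2 : ℕ) (hodd : p % 2 = 1) (h1a : 1 ≤ n1) (h2a : 1 ≤ n2)
    (hs : n1 + n2 ≤ p - 1) :
    (Hb p (p - 1 - n1) (p - 1 - n2)).coeff (p - 1)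
      = (-1) ^ (p - 1 - n1 - n2 + n1) * (((n1 + n2).choose n1 : ℕ) : Polynomial (ZMod p))
          * X ^ n1 * (X - 1) ^ (p - 1 - n1 - n2) := by
  have hp := (Fact.out : p.Prime)
  have h2 := hp.two_le
  set B := p - 1 - n1 - n2 with hB
  have hC : ((-1) ^ (B + n1) * (((n1 + n2).choose n1 : ℕ) : Polynomial (ZMod p)))
      = C ((-1) ^ (B + n1) * (((n1 + n2).choose n1 : ℕ) : ZMod p)) := by
    rw [C_mul, C_eq_natCast]
    norm_num
  have hsplit : (-1) ^ (B + n1) * (((n1 + n2).choose n1 : ℕ) : Polynomial (ZMod p))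
        * X ^ n1 * (X - 1) ^ B
      = C ((-1) ^ (B + n1) * (((n1 + n2).choose n1 : ℕ) : ZMod p))
          * (X ^ n1 * (X - 1) ^ B) := by
    rw [← hC]; ring
  have hsub : (X - 1 : Polynomial (ZMod p)) = X + C (-1) := by
    rw [map_neg, C_1]; ring
  ext u
  rw [Hb_coeff, show p - 1 + 1 = p by omega,
    sum_coeff p (fun j => (((p-1-n1).choose (p-1-j) * (p-1-n2).choose j : ℕ) : ZMod p)) u,
    hsplit, coeff_C_mul, coeff_X_pow_mul', hsub, coeff_X_add_C_pow]
  have hn1p : n1 ≤ p - 1 := by omega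
  rcases lt_or_ge u n1 with hu | hu
  · rw [if_pos (show u < p by omega), if_neg (show ¬ n1 ≤ u by omega), mul_zero]
    have hz : (p - 1 - n1).choose (p - 1 - u) = 0 := Nat.choose_eq_zero_of_lt (by omega)
    simp [hz]
  rcases lt_or_ge u p with hup | hup
  · rw [if_pos (show u < p by omega), if_pos hu]
    rcases le_or_gt u (p - 1 - n2) with hun | hun
    · have hbs := base_scalar (p := p) n1 n2 u hodd hs hu hun
      rw [← hB] at hbs
      push_cast
      push_cast at hbs
      rw [hbs]
    · have hz1 : (p - 1 - n2).choose u = 0 := Nat.choose_eq_zero_of_lt (by omega)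
      have hz2 : B.choose (u - n1) = 0 := Nat.choose_eq_zero_of_lt (by omega)
      simp [hz1, hz2]
  · rw [if_neg (show ¬ u < p by omega), if_pos hu]
    have hz2 : B.choose (u - n1) = 0 := Nat.choose_eq_zero_of_lt (by omega)
    simp [hz2]

lemma castpP {a b : ℕ} (h : a + b = p) :
    ((a : ℕ) : Polynomial (ZMod p)) = -((b : ℕ) : Polynomial (ZMod p)) := by
  calc ((a : ℕ) : Polynomial (ZMod p)) = C ((a : ℕ) : ZMod p) := by rw [C_eq_natCast]
  _ = C (-((b : ℕ) : ZMod p)) := by rw [castp h]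
  _ = -((b : ℕ) : Polynomial (ZMod p)) := by rw [map_neg, C_eq_natCast]

lemma pcast0 : ((p : ℕ) : Polynomial (ZMod p)) = 0 := by
  rw [← C_eq_natCast, ZMod.natCast_self, map_zero]

lemma natCast_ne0 (n : ℕ) (h0 : 0 < n) (h1 : n < p) :
    ((n : ℕ) : Polynomial (ZMod p)) ≠ 0 := by
  rw [← C_eq_natCast, Ne, C_eq_zero, ZMod.natCast_eq_zero_iff]
  intro hdvd
  exact absurd (Nat.le_of_dvd h0 hdvd) (by omega)

lemma Hcoeff0 (a b : ℕ) : (Hb p a b).coeff 0 = 1 := by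
  rw [Hb_coeff]; simp

lemma Hcoeff1 (a b : ℕ) :
    (Hb p a b).coeff 1
      = ((a : ℕ) : Polynomial (ZMod p)) + ((b : ℕ) : Polynomial (ZMod p)) * X := by
  rw [Hb_coeff]
  rw [Finset.sum_range_succ, Finset.sum_range_one]
  simp [C_eq_natCast]

lemma key (n1 n2 : ℕ) (hodd : p % 2 = 1) (h1a : 1 ≤ n1) (h1b : n1 ≤ p - 2)
    (h2a : 1 ≤ n2) (h2b : n2 ≤ p - 2) (hs : n1 + n2 ≤ p - 1) (t : ℕ) (ht : t ≤ n1 + n2) :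
    (((n1 + n2).choose t : ℕ) : Polynomial (ZMod p)) * X ^ t
        * (Hb p (p - 1 - n1) (p - 1 - n2)).coeff (p - 1 - t)
      = (-1) ^ (p - 1 - n1 - n2 + n1 + t) * (((n1 + n2).choose n1 : ℕ) : Polynomial (ZMod p))
          * X ^ n1 * (X - 1) ^ (p - 1 - n1 - n2) * (Hb p n1 n2).coeff t := by
  have hp := (Fact.out : p.Prime)
  have h2 : 2 ≤ p := hp.two_le
  have h3 : 3 ≤ p := by rcases Nat.lt_or_ge p 3 with h | h; · interval_cases p <;> omega
                        · exact h
  have ha' : 1 ≤ p - 1 - n1 := by omega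
  have hb' : 1 ≤ p - 1 - n2 := by omega
  revert ht
  induction t using Nat.strong_induction_on with
  | _ t ih =>
  intro ht
  set B := p - 1 - n1 - n2 with hB
  set Mv := ((X : Polynomial (ZMod p)) - 1) ^ B with hMv
  match t with
  | 0 =>
    rw [Nat.choose_zero_right, pow_zero, Nat.sub_zero, Hcoeff0, Nat.add_zero]
    rw [base_poly n1 n2 hodd h1a h2a hs]
    push_cast
    ring
  | 1 =>
    have hE := Hb_rec (p := p) (p - 1 - n1) (p - 1 - n2) (p - 2) ha' hb'
    rw [show p - 2 + 2 = p by omega, show p - 2 + 1 = p - 1 by omega] at hE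
    rw [pcast0, castpP (show (p - 1 - n1) + (n1 + 1) = p by omega),
      castpP (show (p - 1 - n2) + (n2 + 1) = p by omega),
      castpP (show (p - 1) + 1 = p by omega),
      castpP (show (p - 2) + 2 = p by omega)] at hE
    have hP0 := ih 0 (by omega) (by omega)
    rw [Nat.choose_zero_right, pow_zero, Nat.sub_zero, Hcoeff0, Nat.add_zero] at hP0
    rw [Nat.choose_one_right, pow_one, Hcoeff1, show p - 1 - 1 = p - 2 by omega]
    rw [show B + n1 + 1 = (B + n1) + 1 by ring, pow_succ]
    push_cast at hE hP0 ⊢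
    linear_combination hE - ((n1 : Polynomial (ZMod p)) + n2 * X) * hP0
  | (s+2) =>
    have hsp : s + 2 ≤ n1 + n2 := ht
    have hE := Hb_rec (p := p) (p - 1 - n1) (p - 1 - n2) (p - 3 - s) ha' hb'
    rw [show p - 3 - s + 2 = p - 1 - s by omega, show p - 3 - s + 1 = p - 2 - s by omega] at hE
    rw [castpP (show (p - 1 - s) + (s + 1) = p by omega),
      castpP (show (p - 1 - n1) + (n1 + 1) = p by omega),
      castpP (show (p - 1 - n2) + (n2 + 1) = p by omega),
      castpP (show (p - 2 - s) + (s + 2) = p by omega),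
      castpP (show (p - 3 - s) + (s + 3) = p by omega)] at hE
    have hF := Hb_rec (p := p) n1 n2 s h1a h2a
    have hPm := ih s (by omega) (by omega)
    have hPt := ih (s + 1) (by omega) (by omega)
    rw [show p - 1 - (s + 1) = p - 2 - s by omega] at hPt
    rw [show B + n1 + (s + 1) = (B + n1 + s) + 1 by ring, pow_succ] at hPt
    rw [show p - 1 - (s + 2) = p - 3 - s by omega,
      show B + n1 + (s + 2) = (B + n1 + s) + 2 by ring, pow_add]
    have hC1 := Nat.choose_succ_right_eq (n1 + n2) (s + 1)
    have hC2 := Nat.choose_succ_right_eq (n1 + n2) s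
    have hC1' : (((n1 + n2).choose (s + 2) : ℕ) : Polynomial (ZMod p)) * ((s + 2 : ℕ) : Polynomial (ZMod p))
        = (((n1 + n2).choose (s + 1) : ℕ) : Polynomial (ZMod p))
            * (((n1 + n2 : ℕ) : Polynomial (ZMod p)) - ((s + 1 : ℕ) : Polynomial (ZMod p))) := by
      have := congrArg (fun n : ℕ => ((n : ℕ) : Polynomial (ZMod p))) hC1
      push_cast at this
      rw [Nat.cast_sub (by omega : s + 1 ≤ n1 + n2)] at this
      push_cast at this ⊢
      linear_combination this
    have hC2' : (((n1 + n2).choose (s + 1) : ℕ) : Polynomial (ZMod p)) * ((s + 1 : ℕ) : Polynomial (ZMod p))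
        = (((n1 + n2).choose s : ℕ) : Polynomial (ZMod p))
            * (((n1 + n2 : ℕ) : Polynomial (ZMod p)) - ((s : ℕ) : Polynomial (ZMod p))) := by
      have := congrArg (fun n : ℕ => ((n : ℕ) : Polynomial (ZMod p))) hC2
      push_cast at this
      rw [Nat.cast_sub (by omega : s ≤ n1 + n2)] at this
      push_cast at this ⊢
      linear_combination this
    have hne : ((s + 2 : ℕ) : Polynomial (ZMod p)) ≠ 0 := natCast_ne0 (s + 2) (by omega) (by omega)
    refine mul_left_cancel₀ hne ?_
    push_cast at hE hF hPm hPt hC1' hC2' ⊢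
    linear_combination (X ^ (s + 2) * (Hb p (p - 1 - n1) (p - 1 - n2)).coeff (p - 3 - s)) * hC1'
      + ((((n1 + n2).choose (s + 1) : ℕ) : Polynomial (ZMod p)) * X ^ (s + 1)) * hE
      + (X ^ (s + 1) * (Hb p (p - 1 - n1) (p - 1 - n2)).coeff (p - 1 - s)) * hC2'
      + ((((n1 : ℕ) : Polynomial (ZMod p)) + n2 - s) * X) * hPm
      + (((s : Polynomial (ZMod p)) + 1 - n1) + ((s : Polynomial (ZMod p)) + 1 - n2) * X) * hPt
      - ((-1) ^ (B + n1 + s) * (((n1 + n2).choose n1 : ℕ) : Polynomial (ZMod p)) * X ^ n1 * Mv) * hF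


lemma iff_zero_of_eq {k : Type*} [Field k] {c1 c2 A B : k} (h : c1 * A = c2 * B)
    (hc1 : c1 ≠ 0) (hc2 : c2 ≠ 0) : A = 0 ↔ B = 0 := by
  constructor
  · intro hA
    rw [hA, mul_zero] at h
    rcases mul_eq_zero.mp h.symm with h' | h'
    · exact absurd h' hc2
    · exact h'
  · intro hB
    rw [hB, mul_zero] at h
    rcases mul_eq_zero.mp h with h' | h'
    · exact absurd h' hc1
    · exact h'

end Aux

/-- The `a`-Hasse invariant `Φ_a ∈ 𝔽_p[λ]` of a type `a = (a1, a2, a3, a4)` in the mixed case: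
`Φ_a(λ) = (-1)^(α a3) ∑_{i+j = α a3} C(α a2*, i) C(α a4*, j) λ^j` where `α = (p-1)/m` and
`a_i* = m - a_i`. -/
noncomputable def HasseInv (p m a2 a3 a4 : ℕ) : Polynomial (ZMod p) :=
  let α := (p - 1) / m
  C ((-1 : ZMod p) ^ (α * a3)) *
    ∑ j ∈ Finset.range (α * a3 + 1),
      C ((Nat.choose (α * (m - a2)) (α * a3 - j) * Nat.choose (α * (m - a4)) j : ℕ) : ZMod p) *
        X ^ j

/-- for the dual type `a* = (m-a1, m-a2, m-a3, m-a4)` and `λ ∈ k ∖ {0, 1}` in an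
algebraically closed field `k` of characteristic `p`: `Φ_a(λ) = 0 ↔ Φ_{a*}(λ) = 0`. -/
theorem stmt10 (p m a1 a2 a3 a4 : ℕ) (hp : p.Prime) [Fact p.Prime] (hp2 : 2 < p)
    (hm1 : 1 < m) (hmd : m ∣ p - 1)
    (h1 : 0 < a1 ∧ a1 < m) (h2 : 0 < a2 ∧ a2 < m) (h3 : 0 < a3 ∧ a3 < m)
    (h4 : 0 < a4 ∧ a4 < m) (hsum : a1 + a2 + a3 + a4 = 2 * m)
    (k : Type*) [Field k] [IsAlgClosed k] [CharP k p]
    (lam : k) (hne0 : lam ≠ 0) (hne1 : lam ≠ 1) :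
    ((HasseInv p m a2 a3 a4).map (ZMod.castHom dvd_rfl k)).IsRoot lam ↔
      ((HasseInv p m (m - a2) (m - a3) (m - a4)).map (ZMod.castHom dvd_rfl k)).IsRoot lam := by
  have hodd : p % 2 = 1 := (Nat.Prime.mod_two_eq_one_iff_ne_two hp).mpr (by omega)
  have hFdef : HasseInv p m a2 a3 a4
      = C ((-1 : ZMod p) ^ ((p-1)/m * a3))
          * (Hb p ((p-1)/m * (m - a2)) ((p-1)/m * (m - a4))).coeff ((p-1)/m * a3) := by
    unfold HasseInv
    rw [Hb_coeff]
  have hGdef : HasseInv p m (m - a2) (m - a3) (m - a4)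
      = C ((-1 : ZMod p) ^ ((p-1)/m * (m - a3)))
          * (Hb p ((p-1)/m * a2) ((p-1)/m * a4)).coeff ((p-1)/m * (m - a3)) := by
    unfold HasseInv
    rw [show m - (m - a2) = a2 by omega, show m - (m - a4) = a4 by omega, Hb_coeff]
  rw [hFdef, hGdef]
  set α := (p - 1) / m with hα
  have hαm : α * m = p - 1 := Nat.div_mul_cancel hmd
  have hmle : m ≤ p - 1 := Nat.le_of_dvd (by omega) hmd
  have hα1 : 1 ≤ α := (Nat.one_le_div_iff (by omega)).mpr hmle
  set n1 := α * (m - a2) with hn1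
  set n2 := α * (m - a4) with hn2
  set N := α * a3 with hN
  set n1' := α * a2 with hn1'
  set n2' := α * a4 with hn2'
  set N' := α * (m - a3) with hN'
  have f1 : n1 + n1' = p - 1 := by
    rw [hn1, hn1', ← Nat.mul_add, show m - a2 + a2 = m by omega, hαm]
  have f2 : n2 + n2' = p - 1 := by
    rw [hn2, hn2', ← Nat.mul_add, show m - a4 + a4 = m by omega, hαm]
  have fN : N + N' = p - 1 := by
    rw [hN, hN', ← Nat.mul_add, show a3 + (m - a3) = m by omega, hαm]
  have fS : n1 + n2 = N + α * a1 := by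
    rw [hn1, hn2, hN, ← Nat.mul_add, ← Nat.mul_add, show m - a2 + (m - a4) = a3 + a1 by omega]
  have fS' : n1' + n2' = N' + α * (m - a1) := by
    rw [hn1', hn2', hN', ← Nat.mul_add, ← Nat.mul_add, show a2 + a4 = m - a3 + (m - a1) by omega]
  have g1 : 1 ≤ n1 := by
    have h := Nat.mul_le_mul hα1 (show 1 ≤ m - a2 by omega)
    simpa using h
  have g2 : 1 ≤ n2 := by
    have h := Nat.mul_le_mul hα1 (show 1 ≤ m - a4 by omega)
    simpa using h
  have gN : 1 ≤ N := by
    have h := Nat.mul_le_mul hα1 (show 1 ≤ a3 by omega)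
    simpa using h
  have g1' : 1 ≤ n1' := by
    have h := Nat.mul_le_mul hα1 (show 1 ≤ a2 by omega)
    simpa using h
  have g2' : 1 ≤ n2' := by
    have h := Nat.mul_le_mul hα1 (show 1 ≤ a4 by omega)
    simpa using h
  have gN' : 1 ≤ N' := by
    have h := Nat.mul_le_mul hα1 (show 1 ≤ m - a3 by omega)
    simpa using h
  have ga1 : 1 ≤ α * a1 := by
    have h := Nat.mul_le_mul hα1 (show 1 ≤ a1 by omega)
    simpa using h
  have ga1' : 1 ≤ α * (m - a1) := by
    have h := Nat.mul_le_mul hα1 (show 1 ≤ m - a1 by omega)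
    simpa using h
  -- reduce to the inner coefficient polynomials
  set φ : ZMod p →+* k := ZMod.castHom dvd_rfl k with hφ
  have hu : ∀ e : ℕ, φ ((-1 : ZMod p) ^ e) ≠ 0 := by
    intro e
    rw [map_pow, map_neg, map_one]
    exact pow_ne_zero _ (neg_ne_zero.mpr one_ne_zero)
  have hroot : ∀ (P : Polynomial (ZMod p)) (e : ℕ),
      ((C ((-1 : ZMod p) ^ e) * P).map φ).IsRoot lam ↔ eval₂ φ lam P = 0 := by
    intro P e
    rw [Polynomial.IsRoot, Polynomial.eval_map, eval₂_mul, eval₂_C]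
    constructor
    · intro h
      rcases mul_eq_zero.mp h with h' | h'
      · exact absurd h' (hu e)
      · exact h'
    · intro h
      rw [h, mul_zero]
  rw [hroot, hroot]
  -- nonvanishing helpers in k
  have hcast_ne : ∀ n t : ℕ, n ≤ p - 1 → t ≤ n → ((n.choose t : ℕ) : k) ≠ 0 := by
    intro n t hn ht
    rw [Ne, CharP.cast_eq_zero_iff k p]
    exact choose_ndvd (p := p) n t hn ht
  have hlam_ne : ∀ e : ℕ, lam ^ e ≠ 0 := fun e => pow_ne_zero _ hne0
  have hlam1_ne : ∀ e : ℕ, (lam - 1) ^ e ≠ 0 := fun e => pow_ne_zero _ (sub_ne_zero.mpr hne1)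
  have hneg_ne : ∀ e : ℕ, ((-1 : k)) ^ e ≠ 0 := fun e => pow_ne_zero _ (neg_ne_zero.mpr one_ne_zero)
  rcases le_or_gt (n1 + n2) (p - 1) with hc | hc
  · -- main case
    have hk := key (p := p) n1 n2 hodd g1 (by omega) g2 (by omega) hc N (by omega)
    rw [show p - 1 - n1 = n1' by omega, show p - 1 - n2 = n2' by omega,
      show p - 1 - N = N' by omega] at hk
    have happ := congrArg (fun q => eval₂ φ lam q) hk
    simp only [eval₂_mul, eval₂_pow, eval₂_natCast, eval₂_X, eval₂_sub, eval₂_one,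
      eval₂_neg] at happ
    refine (iff_zero_of_eq happ ?_ ?_).symm
    · exact mul_ne_zero (hcast_ne (n1 + n2) N hc (by omega)) (hlam_ne N)
    · exact mul_ne_zero
        (mul_ne_zero
          (mul_ne_zero (hneg_ne _) (hcast_ne (n1 + n2) n1 hc (by omega)))
          (hlam_ne n1))
        (hlam1_ne _)
  · -- dual case
    have hc' : n1' + n2' ≤ p - 1 := by omega
    have hk := key (p := p) n1' n2' hodd g1' (by omega) g2' (by omega) hc' N' (by omega)
    rw [show p - 1 - n1' = n1 by omega, show p - 1 - n2' = n2 by omega,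
      show p - 1 - N' = N by omega] at hk
    have happ := congrArg (fun q => eval₂ φ lam q) hk
    simp only [eval₂_mul, eval₂_pow, eval₂_natCast, eval₂_X, eval₂_sub, eval₂_one,
      eval₂_neg] at happ
    refine iff_zero_of_eq happ ?_ ?_
    · exact mul_ne_zero (hcast_ne (n1' + n2') N' hc' (by omega)) (hlam_ne N')
    · exact mul_ne_zero
        (mul_ne_zero
          (mul_ne_zero (hneg_ne _) (hcast_ne (n1' + n2') n1' hc' (by omega)))
          (hlam_ne n1'))
        (hlam1_ne _)
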